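/- For a single peakon u = m e^{−|x−x₁|}, the average ⟨u² − uₓ²⟩(x₁) equals 0, so under the integrable peakon ODE ẋ₁ = ⟨u² − uₓ²⟩(x₁) a single mCH peakon is stationary, whereas under the weak-solution ODE ẋ₁ = (2/3)m² + 0 it moves with constant speed (2/3)m². -/

import Mathlib

open Real Filter Topology

/-- For a single peakon `u = m e^{-|x - x₁|}`, the average `⟨u² - uₓ²⟩(x₁)` is `0`:
under the integrable ODE `ẋ₁ = ⟨u² - uₓ²⟩(x₁)` the peakon is stationary, whereas under
the weak-solution ODE `ẋ₁ = (2/3) m²` it moves with constant speed `(2/3) m²`. -/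
theorem single_peakon_stationary_vs_weak
    (m x₁ : ℝ) (hm : 0 < m)
    (u ux Q : ℝ → ℝ)
    (hu : ∀ x, u x = m * Real.exp (-|x - x₁|))
    (hux : ∀ x, ux x = -m * Real.sign (x - x₁) * Real.exp (-|x - x₁|))
    (hQ : ∀ x, Q x = u x ^ 2 - ux x ^ 2)
    (Qp Qm : ℝ)
    (hQp : Tendsto Q (𝓝[>] x₁) (𝓝 Qp))
    (hQm : Tendsto Q (𝓝[<] x₁) (𝓝 Qm)) :
    (Qp + Qm) / 2 = 0 ∧
    (∀ y : ℝ → ℝ, (∀ t, HasDerivAt y ((Qp + Qm) / 2) t) → ∀ t, y t = y 0) ∧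
    (∀ y : ℝ → ℝ, (∀ t, HasDerivAt y ((2 / 3) * m ^ 2) t) →
      ∀ t, y t = y 0 + (2 / 3) * m ^ 2 * t) := by
  have hQ0 : ∀ x, x ≠ x₁ → Q x = 0 := by
    intro x hx
    have hs : Real.sign (x - x₁) ^ 2 = 1 := by
      rcases lt_or_gt_of_ne (sub_ne_zero.mpr hx) with h | h
      · rw [Real.sign_of_neg h]; ring
      · rw [Real.sign_of_pos h]; ring
    rw [hQ, hu, hux]; nlinarith [hs]
  have hQp0 : Qp = 0 := by
    have : Tendsto Q (𝓝[>] x₁) (𝓝 0) := by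
      apply Tendsto.congr' _ tendsto_const_nhds
      filter_upwards [self_mem_nhdsWithin] with x hx
      exact (hQ0 x (ne_of_gt hx)).symm
    exact tendsto_nhds_unique hQp this
  have hQm0 : Qm = 0 := by
    have : Tendsto Q (𝓝[<] x₁) (𝓝 0) := by
      apply Tendsto.congr' _ tendsto_const_nhds
      filter_upwards [self_mem_nhdsWithin] with x hx
      exact (hQ0 x (ne_of_lt hx)).symm
    exact tendsto_nhds_unique hQm this
  have havg : (Qp + Qm) / 2 = 0 := by rw [hQp0, hQm0]; ring
  refine ⟨havg, ?_, ?_⟩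
  · intro y hy t
    have hd : ∀ s, HasDerivAt y 0 s := by intro s; simpa [havg] using hy s
    exact is_const_of_deriv_eq_zero (fun s => (hd s).differentiableAt)
      (fun s => (hd s).deriv) t 0
  · intro y hy t
    set c : ℝ := (2 / 3) * m ^ 2 with hc
    have hd : ∀ s, HasDerivAt (fun s => y s - c * s) 0 s := by
      intro s
      exact ((hy s).sub ((hasDerivAt_id s).const_mul c)).congr_deriv (by ring)
    have := is_const_of_deriv_eq_zero (f := fun s => y s - c * s)
      (fun s => (hd s).differentiableAt) (fun s => (hd s).deriv) t 0
    beta_reduce at this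
    linarith [this]
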